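/- Let Ω ⊆ ℝ² be open and x ∈ Ω. Let Ω₁, …, Ω_M ⊆ ℝ² be open patches, and let w₁, …, w_M : ℝ² → ℝ be differentiable with Σ_{ℓ=1}^M w_ℓ ≡ 1 on Ω, w_ℓ ≥ 0, and with the closed support of w_ℓ contained in Ω_ℓ (so w_ℓ and ∇w_ℓ vanish outside Ω_ℓ); assume ‖∇w_ℓ(x)‖ ≤ C_ℓ. Let ψ₁, …, ψ_M : ℝ² → ℝ be differentiable, let u(x) ∈ ℝ², and suppose ‖u(x) − L(ψ_ℓ)(x)‖ ≤ E_ℓ for every ℓ with x ∈ Ω_ℓ, where L(ψ) = (−∂₂ψ, ∂₁ψ). Fix any k with x ∈ Ω_k and suppose |ψ_ℓ(x) − ψ_k(x)| ≤ δ_ℓ for every ℓ with x ∈ Ω_ℓ. Then the div-free partition-of-unity approximant s̃ = L( Σ_{ℓ=1}^M w_ℓ ψ_ℓ ) satisfies ‖u(x) − s̃(x)‖ ≤ max { E_ℓ : x ∈ Ω_ℓ } + Σ_{ℓ : x ∈ Ω_ℓ} C_ℓ δ_ℓ. -/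

import Mathlib

open scoped Classical

/-- Partial derivative in coordinate direction `i`. -/
noncomputable def pd (i : Fin 2) (f : EuclideanSpace ℝ (Fin 2) → ℝ)
    (x : EuclideanSpace ℝ (Fin 2)) : ℝ :=
  fderiv ℝ f x (EuclideanSpace.single i 1)

/-- The planar rotated-gradient (surface curl) operator `L(f) = (−∂₂f, ∂₁f)`. -/
noncomputable def Lop (f : EuclideanSpace ℝ (Fin 2) → ℝ)
    (x : EuclideanSpace ℝ (Fin 2)) : EuclideanSpace ℝ (Fin 2) :=
  (WithLp.equiv 2 (Fin 2 → ℝ)).symm ![-(pd 1 f x), pd 0 f x]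

lemma grad_apply (f : EuclideanSpace ℝ (Fin 2) → ℝ) (x : EuclideanSpace ℝ (Fin 2)) (i : Fin 2) :
    gradient f x i = pd i f x := by
  have h : (inner ℝ (gradient f x) (EuclideanSpace.single i (1:ℝ)) : ℝ)
      = fderiv ℝ f x (EuclideanSpace.single i 1) := by
    rw [gradient, ← InnerProductSpace.toDual_apply_apply, LinearIsometryEquiv.apply_symm_apply]
  rw [pd, ← h, EuclideanSpace.inner_single_right]
  simp

lemma norm_Lop (f : EuclideanSpace ℝ (Fin 2) → ℝ) (x : EuclideanSpace ℝ (Fin 2)) :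
    ‖Lop f x‖ = ‖gradient f x‖ := by
  rw [EuclideanSpace.norm_eq, EuclideanSpace.norm_eq]
  congr 1
  rw [Fin.sum_univ_two, Fin.sum_univ_two]
  simp [Lop, grad_apply, WithLp.equiv_symm_apply, PiLp.toLp_apply]
  ring

lemma Lop_apply_zero (f : EuclideanSpace ℝ (Fin 2) → ℝ) (x : EuclideanSpace ℝ (Fin 2)) :
    Lop f x 0 = -(pd 1 f x) := rfl

lemma Lop_apply_one (f : EuclideanSpace ℝ (Fin 2) → ℝ) (x : EuclideanSpace ℝ (Fin 2)) :
    Lop f x 1 = pd 0 f x := rfl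

/-- Pointwise error estimate for the div-free partition-of-unity approximant
`s̃ = L(Σ_ℓ w_ℓ ψ_ℓ)` in `ℝ²` (Theorem 4.2, planar div-free form): local interpolation
errors `E ℓ`, weight-gradient bounds `C ℓ`, and potential mismatches `δ ℓ` combine to give
`‖u − s̃(x)‖ ≤ max{E ℓ : x ∈ Ω ℓ} + Σ_{ℓ : x ∈ Ω ℓ} C ℓ * δ ℓ`. -/
theorem divfree_pum_pointwise_error (M : ℕ)
    (Ω : Set (EuclideanSpace ℝ (Fin 2))) (hΩ : IsOpen Ω)
    (x : EuclideanSpace ℝ (Fin 2)) (hx : x ∈ Ω)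
    (Ωp : Fin M → Set (EuclideanSpace ℝ (Fin 2))) (hΩp : ∀ ℓ, IsOpen (Ωp ℓ))
    (w : Fin M → EuclideanSpace ℝ (Fin 2) → ℝ)
    (hw_diff : ∀ ℓ, Differentiable ℝ (w ℓ))
    (hw_sum : ∀ y ∈ Ω, ∑ ℓ, w ℓ y = 1)
    (hw_nonneg : ∀ ℓ y, 0 ≤ w ℓ y)
    (hw_supp : ∀ ℓ, tsupport (w ℓ) ⊆ Ωp ℓ)
    (C : Fin M → ℝ) (hC : ∀ ℓ, ‖gradient (w ℓ) x‖ ≤ C ℓ)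
    (ψ : Fin M → EuclideanSpace ℝ (Fin 2) → ℝ)
    (hψ : ∀ ℓ, Differentiable ℝ (ψ ℓ))
    (u : EuclideanSpace ℝ (Fin 2))
    (E : Fin M → ℝ)
    (hE : ∀ ℓ, x ∈ Ωp ℓ → ‖u - Lop (ψ ℓ) x‖ ≤ E ℓ)
    (k : Fin M) (hk : x ∈ Ωp k)
    (δ : Fin M → ℝ)
    (hδ : ∀ ℓ, x ∈ Ωp ℓ → |ψ ℓ x - ψ k x| ≤ δ ℓ) :
    ‖u - Lop (fun y => ∑ ℓ, w ℓ y * ψ ℓ y) x‖ ≤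
      (Finset.univ.filter fun ℓ => x ∈ Ωp ℓ).sup'
          ⟨k, Finset.mem_filter.mpr ⟨Finset.mem_univ k, hk⟩⟩ E +
        ∑ ℓ ∈ Finset.univ.filter fun ℓ => x ∈ Ωp ℓ, C ℓ * δ ℓ := by
  classical
  set F : Finset (Fin M) := Finset.univ.filter (fun ℓ => x ∈ Ωp ℓ) with hF
  have hkF : k ∈ F := Finset.mem_filter.mpr ⟨Finset.mem_univ k, hk⟩
  have hmemF : ∀ ℓ ∈ F, x ∈ Ωp ℓ := fun ℓ hℓ => (Finset.mem_filter.mp hℓ).2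
  -- vanishing outside F
  have hnt : ∀ ℓ, ℓ ∉ F → x ∉ tsupport (w ℓ) := by
    intro ℓ hℓ hxs
    exact hℓ (Finset.mem_filter.mpr ⟨Finset.mem_univ ℓ, hw_supp ℓ hxs⟩)
  have hwx0 : ∀ ℓ, ℓ ∉ F → w ℓ x = 0 :=
    fun ℓ hℓ => image_eq_zero_of_notMem_tsupport (hnt ℓ hℓ)
  have hfd0 : ∀ ℓ, ℓ ∉ F → fderiv ℝ (w ℓ) x = 0 := by
    intro ℓ hℓ
    by_contra h
    exact hnt ℓ hℓ (support_fderiv_subset ℝ (by simpa [Function.mem_support] using h))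
  have hpdw0 : ∀ ℓ, ℓ ∉ F → ∀ j, pd j (w ℓ) x = 0 := by
    intro ℓ hℓ j; rw [pd, hfd0 ℓ hℓ]; rfl
  have hLw0 : ∀ ℓ, ℓ ∉ F → Lop (w ℓ) x = 0 := by
    intro ℓ hℓ
    ext i
    fin_cases i <;>
      simp [Lop, WithLp.equiv_symm_apply, PiLp.toLp_apply, hpdw0 ℓ hℓ 0, hpdw0 ℓ hℓ 1] <;> rfl
  -- partition of unity at x
  have hsum1 : ∑ ℓ ∈ F, w ℓ x = 1 := by
    rw [Finset.sum_subset F.subset_univ (fun ℓ _ hℓ => hwx0 ℓ hℓ)]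
    exact hw_sum x hx
  -- product/sum rule for pd
  have hpd_sum : ∀ j, pd j (fun y => ∑ ℓ, w ℓ y * ψ ℓ y) x
      = ∑ ℓ, (w ℓ x * pd j (ψ ℓ) x + ψ ℓ x * pd j (w ℓ) x) := by
    intro j
    unfold pd
    rw [fderiv_fun_sum (A := fun ℓ y => w ℓ y * ψ ℓ y) (fun ℓ _ => ((hw_diff ℓ).differentiableAt.mul (hψ ℓ).differentiableAt))]
    rw [ContinuousLinearMap.sum_apply]
    refine Finset.sum_congr rfl fun ℓ _ => ?_
    rw [fderiv_fun_mul (hw_diff ℓ).differentiableAt (hψ ℓ).differentiableAt]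
    simp [ContinuousLinearMap.add_apply, ContinuousLinearMap.smul_apply, smul_eq_mul]
  have hscal : ∀ j, pd j (fun y => ∑ ℓ, w ℓ y * ψ ℓ y) x
      = ∑ ℓ ∈ F, (w ℓ x * pd j (ψ ℓ) x + ψ ℓ x * pd j (w ℓ) x) := by
    intro j
    rw [hpd_sum j,
      ← Finset.sum_subset F.subset_univ (fun ℓ _ hℓ => by
        rw [hwx0 ℓ hℓ, hpdw0 ℓ hℓ j]; ring)]
  -- sum of gradients of weights vanishes at x
  have hpdw_sum : ∀ j, ∑ ℓ, pd j (w ℓ) x = 0 := by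
    intro j
    have h1 : fderiv ℝ (fun y => ∑ ℓ, w ℓ y) x = 0 := by
      have he : (fun y => ∑ ℓ, w ℓ y) =ᶠ[nhds x] (fun _ => (1:ℝ)) :=
        Filter.eventually_of_mem (hΩ.mem_nhds hx) (fun y hy => hw_sum y hy)
      rw [he.fderiv_eq, fderiv_fun_const]
      rfl
    have h2 : fderiv ℝ (fun y => ∑ ℓ, w ℓ y) x = ∑ ℓ, fderiv ℝ (w ℓ) x :=
      fderiv_fun_sum (fun ℓ _ => (hw_diff ℓ).differentiableAt)
    calc ∑ ℓ, pd j (w ℓ) x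
        = (∑ ℓ, fderiv ℝ (w ℓ) x) (EuclideanSpace.single j 1) := by
          rw [ContinuousLinearMap.sum_apply]; rfl
      _ = 0 := by rw [← h2, h1]; rfl
  have hLwsum : ∑ ℓ ∈ F, Lop (w ℓ) x = 0 := by
    rw [Finset.sum_subset F.subset_univ (fun ℓ _ hℓ => hLw0 ℓ hℓ)]
    ext i
    rw [WithLp.ofLp_sum, Finset.sum_apply]
    fin_cases i <;>
      simp [Lop_apply_zero, Lop_apply_one, Finset.sum_neg_distrib, hpdw_sum 0, hpdw_sum 1] <;>
      rfl
  -- key decomposition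
  have key : Lop (fun y => ∑ ℓ, w ℓ y * ψ ℓ y) x
      = (∑ ℓ ∈ F, w ℓ x • Lop (ψ ℓ) x) + ∑ ℓ ∈ F, ψ ℓ x • Lop (w ℓ) x := by
    ext i
    rw [PiLp.add_apply, WithLp.ofLp_sum, Finset.sum_apply, WithLp.ofLp_sum, Finset.sum_apply]
    fin_cases i
    · simp only [Fin.zero_eta, Fin.isValue, Lop_apply_zero, PiLp.smul_apply, smul_eq_mul]
      rw [hscal 1, ← Finset.sum_add_distrib, ← Finset.sum_neg_distrib]
      exact Finset.sum_congr rfl fun ℓ _ => by ring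
    · simp only [Fin.mk_one, Fin.isValue, Lop_apply_one, PiLp.smul_apply, smul_eq_mul]
      rw [hscal 0, ← Finset.sum_add_distrib]
  have hid : u - Lop (fun y => ∑ ℓ, w ℓ y * ψ ℓ y) x
      = (∑ ℓ ∈ F, w ℓ x • (u - Lop (ψ ℓ) x))
        + ∑ ℓ ∈ F, (ψ k x - ψ ℓ x) • Lop (w ℓ) x := by
    have h1 : ∑ ℓ ∈ F, w ℓ x • (u - Lop (ψ ℓ) x)
        = u - ∑ ℓ ∈ F, w ℓ x • Lop (ψ ℓ) x := by
      simp only [smul_sub]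
      rw [Finset.sum_sub_distrib, ← Finset.sum_smul, hsum1, one_smul]
    have h2 : ∑ ℓ ∈ F, (ψ k x - ψ ℓ x) • Lop (w ℓ) x
        = - ∑ ℓ ∈ F, ψ ℓ x • Lop (w ℓ) x := by
      simp only [sub_smul]
      rw [Finset.sum_sub_distrib, ← Finset.smul_sum, hLwsum, smul_zero, zero_sub]
    rw [h1, h2, key]
    abel
  -- final estimate
  have hEmax := (Finset.univ.filter fun ℓ => x ∈ Ωp ℓ).sup'
      (⟨k, Finset.mem_filter.mpr ⟨Finset.mem_univ k, hk⟩⟩ : ((Finset.univ.filter fun ℓ => x ∈ Ωp ℓ)).Nonempty) E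
  have bound1 : ‖∑ ℓ ∈ F, w ℓ x • (u - Lop (ψ ℓ) x)‖ ≤ F.sup'
      ⟨k, hkF⟩ E := by
    calc ‖∑ ℓ ∈ F, w ℓ x • (u - Lop (ψ ℓ) x)‖
        ≤ ∑ ℓ ∈ F, ‖w ℓ x • (u - Lop (ψ ℓ) x)‖ := norm_sum_le _ _
      _ ≤ ∑ ℓ ∈ F, w ℓ x * F.sup' ⟨k, hkF⟩ E := by
          refine Finset.sum_le_sum fun ℓ hℓ => ?_
          rw [norm_smul, Real.norm_of_nonneg (hw_nonneg ℓ x)]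
          exact mul_le_mul_of_nonneg_left
            (le_trans (hE ℓ (hmemF ℓ hℓ)) (Finset.le_sup' E hℓ)) (hw_nonneg ℓ x)
      _ = F.sup' ⟨k, hkF⟩ E := by rw [← Finset.sum_mul, hsum1, one_mul]
  have bound2 : ‖∑ ℓ ∈ F, (ψ k x - ψ ℓ x) • Lop (w ℓ) x‖ ≤ ∑ ℓ ∈ F, C ℓ * δ ℓ := by
    calc ‖∑ ℓ ∈ F, (ψ k x - ψ ℓ x) • Lop (w ℓ) x‖
        ≤ ∑ ℓ ∈ F, ‖(ψ k x - ψ ℓ x) • Lop (w ℓ) x‖ := norm_sum_le _ _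
      _ ≤ ∑ ℓ ∈ F, C ℓ * δ ℓ := by
          refine Finset.sum_le_sum fun ℓ hℓ => ?_
          rw [norm_smul, Real.norm_eq_abs, abs_sub_comm]
          have hd := hδ ℓ (hmemF ℓ hℓ)
          have hc : ‖Lop (w ℓ) x‖ ≤ C ℓ := by rw [norm_Lop]; exact hC ℓ
          calc |ψ ℓ x - ψ k x| * ‖Lop (w ℓ) x‖
              ≤ δ ℓ * C ℓ :=
                mul_le_mul hd hc (norm_nonneg _) (le_trans (abs_nonneg _) hd)
            _ = C ℓ * δ ℓ := mul_comm _ _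
  calc ‖u - Lop (fun y => ∑ ℓ, w ℓ y * ψ ℓ y) x‖
      ≤ ‖∑ ℓ ∈ F, w ℓ x • (u - Lop (ψ ℓ) x)‖
        + ‖∑ ℓ ∈ F, (ψ k x - ψ ℓ x) • Lop (w ℓ) x‖ := by
          rw [hid]; exact norm_add_le _ _
    _ ≤ F.sup' ⟨k, hkF⟩ E + ∑ ℓ ∈ F, C ℓ * δ ℓ := add_le_add bound1 bound2
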